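/- For every integer p ≥ 0, the sum ∑_{k=0}^p (-1)^k (2k+1) P_k(ξ) equals (-1)^p times the derivative of the right Radau polynomial R⁻_{p+1}(ξ) = P_{p+1}(ξ) - P_p(ξ), where P_k denotes the k-th Legendre polynomial. -/
import Mathlib

open Polynomial intervalIntegral

/-- The `k`-th Legendre polynomial, defined via the Rodrigues formula. -/
noncomputable def leg (k : ℕ) : Polynomial ℝ :=
  C (1 / (2 ^ k * (k.factorial : ℝ))) * (fun q => derivative q)^[k] ((X ^ 2 - 1) ^ k)

/-- The right Radau polynomial `R⁻_{p+1} = P_{p+1} - P_p`. -/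
noncomputable def radau (p : ℕ) : Polynomial ℝ := leg (p + 1) - leg p

lemma iterD_add (k : ℕ) (p q : Polynomial ℝ) :
    (⇑derivative)^[k] (p + q) = (⇑derivative)^[k] p + (⇑derivative)^[k] q := by
  induction k generalizing p q with
  | zero => simp
  | succ n ih => simp [Function.iterate_succ_apply, derivative_add, ih]

lemma legA (m : ℕ) :
    derivative (derivative ((X ^ 2 - 1 : Polynomial ℝ) ^ (m + 2))) =
      C ((2 * (m + 2) * (2 * m + 3) : ℝ)) * (X ^ 2 - 1) ^ (m + 1) +
      C ((4 * (m + 1) * (m + 2) : ℝ)) * (X ^ 2 - 1) ^ m := by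
  have h : ∀ k : ℕ, derivative ((X ^ 2 - 1 : Polynomial ℝ) ^ (k + 1)) =
      C ((2 * (k + 1) : ℝ)) * X * (X ^ 2 - 1) ^ k := by
    intro k
    rw [derivative_pow]
    simp only [derivative_sub, derivative_one, derivative_X_pow, derivative_zero]
    push_cast
    simp only [C_add, C_mul, C_1, map_ofNat]
    ring
  rw [h (m + 1), derivative_mul, h m, derivative_mul, derivative_C, derivative_X]
  push_cast
  simp only [C_add, C_mul, C_1, map_ofNat]
  ring

lemma legB (n : ℕ) :
    derivative (leg (n + 2)) = derivative (leg n) + C ((2 * n + 3 : ℝ)) * leg (n + 1) := by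
  have hD : ∀ k : ℕ, derivative (leg k) =
      C (1 / (2 ^ k * (k.factorial : ℝ))) * (⇑derivative)^[k + 1] ((X ^ 2 - 1) ^ k) := by
    intro k
    rw [leg, derivative_C_mul, Function.iterate_succ_apply']
  rw [hD, hD n]
  have h3 : (n + 2) + 1 = (n + 1) + 2 := by ring
  rw [h3, Function.iterate_add_apply]
  have h2 : (⇑derivative)^[2] ((X ^ 2 - 1 : Polynomial ℝ) ^ (n + 2)) =
      C ((2 * (n + 2) * (2 * n + 3) : ℝ)) * (X ^ 2 - 1) ^ (n + 1) +
      C ((4 * (n + 1) * (n + 2) : ℝ)) * (X ^ 2 - 1) ^ n := by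
    have := legA n
    simpa [Function.iterate_succ_apply] using legA n
  have e1 : (1 / (2 ^ (n + 2) * ((n + 2).factorial : ℝ))) * (2 * (n + 2) * (2 * n + 3))
      = (2 * n + 3) * (1 / (2 ^ (n + 1) * ((n + 1).factorial : ℝ))) := by
    rw [Nat.factorial_succ (n + 1)]
    have := (n + 1).factorial_pos
    push_cast
    field_simp
    ring
  have e2 : (1 / (2 ^ (n + 2) * ((n + 2).factorial : ℝ))) * (4 * (n + 1) * (n + 2))
      = 1 / (2 ^ n * (n.factorial : ℝ)) := by
    rw [Nat.factorial_succ (n + 1), Nat.factorial_succ n]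
    have := n.factorial_pos
    push_cast
    field_simp
    ring
  rw [h2, iterD_add, iterate_derivative_C_mul, iterate_derivative_C_mul, leg]
  have hA : (C (1 / (2 ^ (n + 2) * ((n + 2).factorial : ℝ))) : Polynomial ℝ) *
      C ((2 * (n + 2) * (2 * n + 3) : ℝ)) =
      C ((2 * n + 3 : ℝ)) * C (1 / (2 ^ (n + 1) * ((n + 1).factorial : ℝ))) := by
    rw [← C_mul, ← C_mul, e1]
  have hB : (C (1 / (2 ^ (n + 2) * ((n + 2).factorial : ℝ))) : Polynomial ℝ) *
      C ((4 * (n + 1) * (n + 2) : ℝ)) = C (1 / (2 ^ n * (n.factorial : ℝ))) := by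
    rw [← C_mul, e2]
  linear_combination ((⇑derivative)^[n + 1] ((X ^ 2 - 1 : Polynomial ℝ) ^ (n + 1))) * hA +
    ((⇑derivative)^[n + 1] ((X ^ 2 - 1 : Polynomial ℝ) ^ n)) * hB

theorem sum_alt_legendre_eq_radau_deriv (p : ℕ) :
    ∑ k ∈ Finset.range (p + 1), C ((-1 : ℝ) ^ k * (2 * k + 1)) * leg k =
      C ((-1 : ℝ) ^ p) * derivative (radau p) := by
  induction p with
  | zero =>
      have l0 : leg 0 = 1 := by simp [leg]
      have l1 : leg 1 = X := by
        rw [leg]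
        simp only [Function.iterate_one, pow_one, derivative_sub, derivative_one,
          derivative_X_pow, Nat.factorial_one]
        rw [sub_zero, pow_one, ← mul_assoc, ← C_mul]
        norm_num
      simp [radau, l0, l1]
  | succ p ih =>
      rw [Finset.sum_range_succ, ih, radau, radau, derivative_sub, derivative_sub,
        legB p]
      push_cast
      simp only [C_add, C_mul, C_1, C_neg, C_pow, map_ofNat]
      ring
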